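/- Let (W_t)_{t ≥ 1} be independent, identically distributed, integrable real-valued random variables with E[W_1] = D > 0. Define the CuSum statistic c_0 = 0, c_t = max(c_{t−1} + W_t, 0), and for b > 0 the stopping time T_b = inf{ t ≥ 1 : c_t ≥ b }. Then limsup_{b → ∞} E[T_b] / b ≤ 1 / D. -/

import Mathlib

open MeasureTheory ProbabilityTheory Filter Topology
open scoped ENNReal

noncomputable section

namespace QCDStmt

/-- The CuSum recursion `c 0 = 0`, `c (t+1) = max (c t + W t) 0`
(here `W t` is the increment of the `(t+1)`-st observation). -/
def cusumW {Ω : Type*} (W : ℕ → Ω → ℝ) : ℕ → Ω → ℝ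
  | 0 => fun _ => 0
  | t + 1 => fun ω => max (cusumW W t ω + W t ω) 0

/-- The CuSum stopping time `T_b = inf {t ≥ 1 : c t ≥ b}` (with `inf ∅ = ∞`). -/
def cusumWHit {Ω : Type*} (W : ℕ → Ω → ℝ) (b : ℝ) (ω : Ω) : ℕ∞ :=
  sInf {s : ℕ∞ | ∃ t : ℕ, s = (t : ℕ∞) ∧ 1 ≤ t ∧ b ≤ cusumW W t ω}

section Aux

variable {Ω : Type*} {W : ℕ → Ω → ℝ} {b : ℝ} {ω : Ω}

lemma cusum_nonneg (t : ℕ) : 0 ≤ cusumW W t ω := by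
  cases t with
  | zero => simp [cusumW]
  | succ t => exact le_max_right _ _

lemma cusum_ge {s t : ℕ} (h : s ≤ t) :
    cusumW W s ω + ∑ i ∈ Finset.Ico s t, W i ω ≤ cusumW W t ω := by
  induction t, h using Nat.le_induction with
  | base => simp
  | succ t ht ih =>
    have : cusumW W t ω + W t ω ≤ cusumW W (t+1) ω := le_max_left _ _
    rw [Finset.sum_Ico_succ_top (by omega)]
    linarith

lemma hit_le {t : ℕ} (ht : 1 ≤ t) (hb : b ≤ cusumW W t ω) :
    cusumWHit W b ω ≤ (t : ℕ∞) :=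
  sInf_le ⟨t, rfl, ht, hb⟩

lemma lt_hit_iff {k : ℕ} :
    (k : ℕ∞) < cusumWHit W b ω ↔ ∀ t : ℕ, 1 ≤ t → t ≤ k → cusumW W t ω < b := by
  constructor
  · intro h t h1 h2
    by_contra hc
    push_neg at hc
    exact absurd (lt_of_lt_of_le h ((hit_le h1 hc).trans (by exact_mod_cast h2)))
      (lt_irrefl _)
  · intro h
    have hk1 : (k : ℕ∞) < (k : ℕ∞) + 1 := by
      exact_mod_cast Nat.lt_succ_self k
    refine lt_of_lt_of_le hk1 (le_sInf ?_)
    rintro s ⟨t, rfl, h1, hb'⟩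
    have : ¬ t ≤ k := fun hle => absurd hb' (not_le.2 (h t h1 hle))
    have : k + 1 ≤ t := by omega
    exact_mod_cast this

lemma cusum_measurable [MeasurableSpace Ω] (hmeas : ∀ t, Measurable (W t)) (t : ℕ) :
    Measurable (cusumW W t) := by
  induction t with
  | zero => simp only [cusumW]; exact measurable_const
  | succ t ih => exact (ih.add (hmeas t)).max measurable_const

lemma measurableSet_lt_hit [MeasurableSpace Ω] (hmeas : ∀ t, Measurable (W t)) (k : ℕ) :
    MeasurableSet {ω | (k : ℕ∞) < cusumWHit W b ω} := by
  have : {ω | (k : ℕ∞) < cusumWHit W b ω}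
      = ⋂ t ∈ Finset.Icc 1 k, {ω | cusumW W t ω < b} := by
    ext ω
    simp only [Set.mem_setOf_eq, lt_hit_iff, Set.mem_iInter, Finset.mem_Icc]
    exact ⟨fun h t ht => h t ht.1 ht.2, fun h t h1 h2 => h t ⟨h1, h2⟩⟩
  rw [this]
  exact MeasurableSet.biInter (Finset.countable_toSet _)
    (fun t _ => measurableSet_lt (cusum_measurable hmeas t) measurable_const)

lemma enat_toennreal_eq_tsum (m : ℕ∞) :
    (m : ℝ≥0∞) = ∑' k : ℕ, (if (k : ℕ∞) < m then (1:ℝ≥0∞) else 0) := by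
  cases m with
  | top =>
    have h1 : ∀ k : ℕ, (if (k : ℕ∞) < ⊤ then (1:ℝ≥0∞) else 0) = 1 := by
      intro k; rw [if_pos (lt_top_iff_ne_top.2 (by simp))]
    rw [tsum_congr h1, ENNReal.tsum_const_eq_top_of_ne_zero one_ne_zero]
    simp
  | coe n =>
    rw [tsum_eq_sum (s := Finset.range n) (by
      intro k hk
      rw [if_neg]
      exact fun h => hk (Finset.mem_range.mpr (by exact_mod_cast h)))]
    rw [Finset.sum_congr rfl (fun k hk => if_pos (by exact_mod_cast Finset.mem_range.mp hk))]
    simp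

lemma layer_cake [MeasurableSpace Ω] (P : Measure Ω) (hmeas : ∀ t, Measurable (W t)) :
    ∫⁻ ω, (cusumWHit W b ω : ℝ≥0∞) ∂P = ∑' k : ℕ, P {ω | (k : ℕ∞) < cusumWHit W b ω} := by
  calc ∫⁻ ω, (cusumWHit W b ω : ℝ≥0∞) ∂P
      = ∫⁻ ω, ∑' k : ℕ, Set.indicator {ω | (k : ℕ∞) < cusumWHit W b ω} (fun _ => (1:ℝ≥0∞)) ω ∂P := by
        refine lintegral_congr fun ω => ?_
        rw [enat_toennreal_eq_tsum (cusumWHit W b ω)]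
        exact tsum_congr fun k => by rw [Set.indicator_apply]; rfl
    _ = ∑' k : ℕ, ∫⁻ ω, Set.indicator {ω | (k : ℕ∞) < cusumWHit W b ω} (fun _ => (1:ℝ≥0∞)) ω ∂P :=
        lintegral_tsum fun k => ((measurable_const.indicator (measurableSet_lt_hit hmeas k)).aemeasurable)
    _ = ∑' k : ℕ, P {ω | (k : ℕ∞) < cusumWHit W b ω} := by
        refine tsum_congr fun k => ?_
        rw [lintegral_indicator (measurableSet_lt_hit hmeas k)]
        simp

end Aux

section Indep

variable {Ω : Type*} [MeasurableSpace Ω] {P : Measure Ω} [IsProbabilityMeasure P]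
  {W : ℕ → Ω → ℝ}

lemma block_inter_eq_prod (hmeas : ∀ t, Measurable (W t))
    (hindep : iIndepFun W P) (n : ℕ) (b : ℝ) (k : ℕ) :
    P (⋂ j ∈ Finset.range k, {ω | ∑ i ∈ Finset.range n, W (j*n + i) ω < b})
      = ∏ j ∈ Finset.range k, P {ω | ∑ i ∈ Finset.range n, W (j*n + i) ω < b} := by
  set A : ℕ → Set Ω := fun j => {ω | ∑ i ∈ Finset.range n, W (j*n + i) ω < b} with hA
  induction k with
  | zero => simp
  | succ k ih =>
    rw [Finset.range_add_one, Finset.set_biInter_insert, Finset.prod_insert (by simp),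
      Set.inter_comm, ← ih]
    have h_le : ∀ i, MeasurableSpace.comap (W i) inferInstance ≤ (inferInstance : MeasurableSpace Ω) :=
      fun i => (hmeas i).comap_le
    have hIndep : Indep (⨆ i ∈ Set.Iio (k*n), MeasurableSpace.comap (W i) inferInstance)
        (⨆ i ∈ Set.Ici (k*n), MeasurableSpace.comap (W i) inferInstance) P :=
      indep_iSup_of_disjoint h_le hindep.iIndep (Set.Iio_disjoint_Ici le_rfl)
    have hmeas1 : ∀ i ∈ Set.Iio (k*n),
        Measurable[⨆ i ∈ Set.Iio (k*n), MeasurableSpace.comap (W i) inferInstance] (W i) := by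
      intro i hi
      exact Measurable.of_comap_le (le_iSup₂ (f := fun i _ => MeasurableSpace.comap (W i) inferInstance) i hi)
    have hmeas2 : ∀ i ∈ Set.Ici (k*n),
        Measurable[⨆ i ∈ Set.Ici (k*n), MeasurableSpace.comap (W i) inferInstance] (W i) := by
      intro i hi
      exact Measurable.of_comap_le (le_iSup₂ (f := fun i _ => MeasurableSpace.comap (W i) inferInstance) i hi)
    have hMS1 : MeasurableSet[⨆ i ∈ Set.Iio (k*n), MeasurableSpace.comap (W i) inferInstance]
        (⋂ j ∈ Finset.range k, A j) := by
      refine MeasurableSet.biInter (Finset.countable_toSet _) fun j hj => ?_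
      have hBj : Measurable[⨆ i ∈ Set.Iio (k*n), MeasurableSpace.comap (W i) inferInstance]
          (fun ω => ∑ i ∈ Finset.range n, W (j*n + i) ω) := by
        refine Finset.measurable_sum _ fun i hi => ?_
        refine hmeas1 _ ?_
        have hj' := Finset.mem_range.mp hj
        have hi' := Finset.mem_range.mp hi
        simp only [Set.mem_Iio]
        calc j*n + i < j*n + n := by omega
          _ ≤ k*n := by nlinarith
      exact hBj measurableSet_Iio
    have hMS2 : MeasurableSet[⨆ i ∈ Set.Ici (k*n), MeasurableSpace.comap (W i) inferInstance]
        (A k) := by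
      have hBk : Measurable[⨆ i ∈ Set.Ici (k*n), MeasurableSpace.comap (W i) inferInstance]
          (fun ω => ∑ i ∈ Finset.range n, W (k*n + i) ω) := by
        refine Finset.measurable_sum _ fun i hi => ?_
        exact hmeas2 _ (by simp)
      exact hBk measurableSet_Iio
    rw [(hIndep.indepSet_of_measurableSet hMS1 hMS2).measure_inter_eq_mul, mul_comm]

lemma map_add_indep {X Y X' Y' : Ω → ℝ} (hX : Measurable X) (hY : Measurable Y)
    (hX' : Measurable X') (hY' : Measurable Y') (h1 : IndepFun X Y P) (h2 : IndepFun X' Y' P)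
    (hXX : Measure.map X P = Measure.map X' P) (hYY : Measure.map Y P = Measure.map Y' P) :
    Measure.map (fun ω => X ω + Y ω) P = Measure.map (fun ω => X' ω + Y' ω) P := by
  have e1 : (fun ω => X ω + Y ω) = (fun p : ℝ × ℝ => p.1 + p.2) ∘ (fun ω => (X ω, Y ω)) := rfl
  have e2 : (fun ω => X' ω + Y' ω) = (fun p : ℝ × ℝ => p.1 + p.2) ∘ (fun ω => (X' ω, Y' ω)) := rfl
  rw [e1, e2, ← Measure.map_map measurable_add (hX.prodMk hY),
    ← Measure.map_map measurable_add (hX'.prodMk hY'),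
    (indepFun_iff_map_prod_eq_prod_map_map hX.aemeasurable hY.aemeasurable).mp h1,
    (indepFun_iff_map_prod_eq_prod_map_map hX'.aemeasurable hY'.aemeasurable).mp h2,
    hXX, hYY]

lemma block_sum_ident (hmeas : ∀ t, Measurable (W t))
    (hindep : iIndepFun W P)
    (hident : ∀ t, Measure.map (W t) P = Measure.map (W 0) P)
    (o m : ℕ) :
    Measure.map (fun ω => ∑ i ∈ Finset.range m, W (o + i) ω) P
      = Measure.map (fun ω => ∑ i ∈ Finset.range m, W i ω) P := by
  induction m with
  | zero => simp
  | succ m ih =>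
    have hXmeas : Measurable (fun ω => ∑ i ∈ Finset.range m, W (o + i) ω) :=
      Finset.measurable_sum _ fun i _ => hmeas _
    have hX'meas : Measurable (fun ω => ∑ i ∈ Finset.range m, W i ω) :=
      Finset.measurable_sum _ fun i _ => hmeas _
    have hfun : (fun ω => ∑ i ∈ Finset.range m, W (o + i) ω)
        = ∑ j ∈ (Finset.range m).image (o + ·), W j := by
      funext ω
      rw [Finset.sum_apply, Finset.sum_image (fun a _ b _ h => by omega)]
    have h1 : IndepFun (fun ω => ∑ i ∈ Finset.range m, W (o + i) ω) (W (o + m)) P := by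
      rw [hfun]
      exact hindep.indepFun_finsetSum_of_notMem hmeas
        (by simp only [Finset.mem_image, Finset.mem_range]; rintro ⟨a, ha, h⟩; omega)
    have h2 : IndepFun (fun ω => ∑ i ∈ Finset.range m, W i ω) (W m) P := by
      have := hindep.indepFun_sum_range_succ hmeas m
      convert this using 1
      funext ω
      rw [Finset.sum_apply]
    simp only [Finset.sum_range_succ]
    exact map_add_indep hXmeas (hmeas _) hX'meas (hmeas _) h1 h2 ih
      ((hident _).trans (hident m).symm)

lemma lln_prob_tendsto (hmeas : ∀ t, Measurable (W t))
    (hindep : iIndepFun W P)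
    (hident : ∀ t, Measure.map (W t) P = Measure.map (W 0) P)
    (hint : Integrable (W 0) P) {D a : ℝ} (hD : ∫ ω, W 0 ω ∂P = D) (ha : a < D) :
    Tendsto (fun n : ℕ => P {ω | ∑ i ∈ Finset.range n, W i ω < a * n}) atTop (𝓝 0) := by
  have hident' : ∀ i, IdentDistrib (W i) (W 0) P P :=
    fun i => ⟨(hmeas i).aemeasurable, (hmeas 0).aemeasurable, hident i⟩
  have hpair : Pairwise (Function.onFun (IndepFun · · P) W) := fun i j h => hindep.indepFun h
  have hae := strong_law_ae_real W hint hpair hident'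
  rw [hD] at hae
  have htm : TendstoInMeasure P (fun n ω => (∑ i ∈ Finset.range n, W i ω) / n) atTop
      (fun _ => D) :=
    tendstoInMeasure_of_tendsto_ae
      (fun n => ((Finset.measurable_sum _ fun i _ => hmeas i).div_const _).aestronglyMeasurable)
      hae
  have hε : (0:ℝ) < D - a := by linarith
  have h0 := tendstoInMeasure_iff_dist.mp htm (D - a) hε
  refine tendsto_of_tendsto_of_tendsto_of_le_of_le tendsto_const_nhds h0
    (fun n => zero_le) ?_
  intro n
  refine measure_mono ?_
  intro ω hω
  simp only [Set.mem_setOf_eq] at hω ⊢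
  rcases Nat.eq_zero_or_pos n with hn | hn
  · exfalso; simp [hn] at hω
  · have hnR : (0:ℝ) < n := by exact_mod_cast hn
    have : (∑ i ∈ Finset.range n, W i ω) / n < a := by
      rw [div_lt_iff₀ hnR]; linarith [hω]
    rw [Real.dist_eq, abs_sub_comm]
    rw [abs_of_nonneg (by linarith)]
    linarith

lemma tail_sum_le (g : ℕ → ℝ≥0∞) (n : ℕ) (hn : 1 ≤ n) (q : ℝ≥0∞)
    (hmono : ∀ {j m : ℕ}, j ≤ m → g m ≤ g j)
    (hblock : ∀ k, g (k * n) ≤ q ^ k) :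
    ∑' m : ℕ, g m ≤ (n : ℝ≥0∞) * (1 - q)⁻¹ := by
  haveI : NeZero n := ⟨by omega⟩
  calc ∑' m : ℕ, g m = ∑' p : ℕ × Fin n, g (p.1 * n + (p.2 : ℕ)) := by
        rw [← Equiv.tsum_eq (Nat.divModEquiv n).symm g]
        rfl
    _ ≤ ∑' p : ℕ × Fin n, g (p.1 * n) :=
        ENNReal.tsum_le_tsum fun p => hmono (Nat.le_add_right _ _)
    _ = ∑' k : ℕ, ∑' r : Fin n, g (k * n) :=
        ENNReal.tsum_prod (f := fun k (_ : Fin n) => g (k * n))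
    _ = ∑' k : ℕ, (n : ℝ≥0∞) * g (k * n) := by
        refine tsum_congr fun k => ?_
        rw [tsum_fintype, Finset.sum_const, Finset.card_univ, Fintype.card_fin, nsmul_eq_mul]
    _ ≤ ∑' k : ℕ, (n : ℝ≥0∞) * q ^ k :=
        ENNReal.tsum_le_tsum fun k => mul_le_mul_right (hblock k) _
    _ = (n : ℝ≥0∞) * ∑' k : ℕ, q ^ k := ENNReal.tsum_mul_left
    _ = (n : ℝ≥0∞) * (1 - q)⁻¹ := by rw [ENNReal.tsum_geometric]

end Indep

lemma limsup_le_one_div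
    {Ω : Type*} [MeasurableSpace Ω] (P : Measure Ω) [IsProbabilityMeasure P]
    (W : ℕ → Ω → ℝ) (hmeas : ∀ t, Measurable (W t))
    (hindep : iIndepFun W P)
    (hident : ∀ t, Measure.map (W t) P = Measure.map (W 0) P)
    (hint : Integrable (W 0) P)
    (D : ℝ) (hD : ∫ ω, W 0 ω ∂P = D)
    (a : ℝ) (ha : 0 < a) (haD : a < D) :
    Filter.limsup
        (fun b : ℝ => (∫⁻ ω, (cusumWHit W b ω : ℝ≥0∞) ∂P) / ENNReal.ofReal b)
        Filter.atTop ≤ ENNReal.ofReal (1 / a) := by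
  set nb : ℝ → ℕ := fun b => ⌈b / a⌉₊ with hnbdef
  set q : ℝ → ℝ≥0∞ :=
    fun b => P {ω | ∑ i ∈ Finset.range (nb b), W i ω < a * (nb b)} with hqdef
  -- main pointwise bound
  have key : ∀ b : ℝ, 1 ≤ b →
      (∫⁻ ω, (cusumWHit W b ω : ℝ≥0∞) ∂P) ≤ (nb b : ℝ≥0∞) * (1 - q b)⁻¹ := by
    intro b hb
    have hbpos : (0:ℝ) < b := by linarith
    set n := nb b with hn_def
    have hnpos : 0 < n := Nat.ceil_pos.mpr (div_pos hbpos ha)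
    have hban : b ≤ a * n := by
      have h1 : b / a ≤ (n : ℝ) := Nat.le_ceil _
      calc b = a * (b / a) := by field_simp
        _ ≤ a * n := by nlinarith
    rw [layer_cake P hmeas]
    refine tail_sum_le _ n hnpos (q b) ?_ ?_
    · intro j m hjm
      refine measure_mono fun ω hω => ?_
      simp only [Set.mem_setOf_eq] at hω ⊢
      exact lt_of_le_of_lt (by exact_mod_cast hjm) hω
    · intro k
      set A : ℕ → Set Ω := fun j => {ω | ∑ i ∈ Finset.range n, W (j*n + i) ω < b} with hA
      have incl : {ω | ((k*n : ℕ) : ℕ∞) < cusumWHit W b ω} ⊆ ⋂ j ∈ Finset.range k, A j := by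
        intro ω hω
        simp only [Set.mem_setOf_eq] at hω
        refine Set.mem_biInter fun j hj => ?_
        have hjk := Finset.mem_range.mp hj
        have ht1 : 1 ≤ j*n + n := by omega
        have ht2 : j*n + n ≤ k*n := by
          calc j*n + n = (j+1)*n := by ring
            _ ≤ k*n := Nat.mul_le_mul_right n (by omega)
        have h1 : cusumW W (j*n + n) ω < b := lt_hit_iff.mp hω _ ht1 ht2
        have h2 : ∑ i ∈ Finset.range n, W (j*n + i) ω
            = ∑ i ∈ Finset.Ico (j*n) (j*n + n), W i ω := by
          rw [Finset.sum_Ico_eq_sum_range]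
          simp
        have h3 := cusum_ge (ω := ω) (W := W) (Nat.le_add_right (j*n) n)
        have h0 := cusum_nonneg (W := W) (ω := ω) (j*n)
        simp only [Set.mem_setOf_eq, hA, h2]
        linarith
      have hAq : ∀ j, P (A j) ≤ q b := by
        intro j
        have hBj : Measurable (fun ω => ∑ i ∈ Finset.range n, W (j*n + i) ω) :=
          Finset.measurable_sum _ fun i _ => hmeas _
        have hB0 : Measurable (fun ω => ∑ i ∈ Finset.range n, W i ω) :=
          Finset.measurable_sum _ fun i _ => hmeas _
        have hmapeq := block_sum_ident hmeas hindep hident (j*n) n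
        have e1 : P (A j)
            = Measure.map (fun ω => ∑ i ∈ Finset.range n, W (j*n + i) ω) P (Set.Iio b) := by
          rw [Measure.map_apply hBj measurableSet_Iio]; rfl
        have e2 : Measure.map (fun ω => ∑ i ∈ Finset.range n, W i ω) P (Set.Iio b)
            = P {ω | ∑ i ∈ Finset.range n, W i ω < b} := by
          rw [Measure.map_apply hB0 measurableSet_Iio]; rfl
        rw [e1, hmapeq, e2]
        exact measure_mono fun ω hω => lt_of_lt_of_le hω hban
      calc P {ω | ((k*n : ℕ) : ℕ∞) < cusumWHit W b ω}
          ≤ P (⋂ j ∈ Finset.range k, A j) := measure_mono incl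
        _ = ∏ j ∈ Finset.range k, P (A j) := block_inter_eq_prod hmeas hindep n b k
        _ ≤ ∏ _j ∈ Finset.range k, q b := Finset.prod_le_prod' fun j _ => hAq j
        _ = q b ^ k := by rw [Finset.prod_const, Finset.card_range]
  -- eventual bound by a function tending to ofReal (1/a)
  have ev : ∀ᶠ b : ℝ in atTop,
      (∫⁻ ω, (cusumWHit W b ω : ℝ≥0∞) ∂P) / ENNReal.ofReal b
        ≤ ENNReal.ofReal ((nb b : ℝ) / b) * (1 - q b)⁻¹ := by
    filter_upwards [eventually_ge_atTop (1:ℝ)] with b hb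
    have hbpos : (0:ℝ) < b := by linarith
    have h1 := ENNReal.div_le_div_right (key b hb) (ENNReal.ofReal b)
    refine h1.trans (le_of_eq ?_)
    rw [ENNReal.ofReal_div_of_pos hbpos, ENNReal.ofReal_natCast, div_eq_mul_inv,
      div_eq_mul_inv, mul_right_comm]
  -- tendsto of the bounding function
  have hnbt : Tendsto (fun b : ℝ => (nb b : ℝ) / b) atTop (𝓝 (1/a)) := by
    have hupper : Tendsto (fun b : ℝ => 1/a + 1/b) atTop (𝓝 (1/a)) := by
      have : Tendsto (fun b : ℝ => 1/b) atTop (𝓝 0) := by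
        simpa [one_div] using tendsto_inv_atTop_zero (𝕜 := ℝ)
      simpa using tendsto_const_nhds.add this
    refine tendsto_of_tendsto_of_tendsto_of_le_of_le' tendsto_const_nhds hupper ?_ ?_
    · filter_upwards [eventually_ge_atTop (1:ℝ)] with b hb
      have hbpos : (0:ℝ) < b := by linarith
      rw [le_div_iff₀ hbpos]
      calc (1/a) * b = b / a := by ring
        _ ≤ (nb b : ℝ) := Nat.le_ceil _
    · filter_upwards [eventually_ge_atTop (1:ℝ)] with b hb
      have hbpos : (0:ℝ) < b := by linarith
      rw [div_le_iff₀ hbpos]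
      have h1 : (nb b : ℝ) < b/a + 1 := Nat.ceil_lt_add_one (by positivity)
      have h2 : (1/a + 1/b) * b = b/a + 1 := by field_simp
      linarith
  have hq0 : Tendsto q atTop (𝓝 0) := by
    have hφ := lln_prob_tendsto hmeas hindep hident hint hD haD
    exact hφ.comp (tendsto_nat_ceil_atTop.comp (tendsto_id.atTop_div_const ha))
  have h1q : Tendsto (fun b => (1 - q b)⁻¹) atTop (𝓝 1) := by
    have h1 : Tendsto (fun b => 1 - q b) atTop (𝓝 (1 - 0)) :=
      ((ENNReal.continuous_sub_left (by norm_num : (1:ℝ≥0∞) ≠ ⊤)).tendsto 0).comp hq0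
    have := ENNReal.tendsto_inv_iff.mpr h1
    simpa using this
  have hE : Tendsto (fun b : ℝ => ENNReal.ofReal ((nb b : ℝ) / b) * (1 - q b)⁻¹) atTop
      (𝓝 (ENNReal.ofReal (1/a) * 1)) := by
    refine ENNReal.Tendsto.mul ((ENNReal.continuous_ofReal.tendsto _).comp hnbt) ?_ h1q ?_
    · exact Or.inr (by norm_num)
    · exact Or.inl one_ne_zero
  calc Filter.limsup
        (fun b : ℝ => (∫⁻ ω, (cusumWHit W b ω : ℝ≥0∞) ∂P) / ENNReal.ofReal b)
        Filter.atTop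
      ≤ Filter.limsup (fun b : ℝ => ENNReal.ofReal ((nb b : ℝ) / b) * (1 - q b)⁻¹) atTop :=
        limsup_le_limsup ev
    _ = ENNReal.ofReal (1/a) * 1 := hE.limsup_eq
    _ = ENNReal.ofReal (1/a) := mul_one _

/-- **Asymptotic CuSum detection delay upper bound.** If `W 0, W 1, …` are i.i.d.
integrable with mean `D > 0` (with `W t` playing the role of `W_{t+1}`), then
`limsup_{b → ∞} E[T_b] / b ≤ 1 / D`. -/
theorem cusum_delay_upper_bound
    {Ω : Type*} [MeasurableSpace Ω] (P : Measure Ω) [IsProbabilityMeasure P]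
    (W : ℕ → Ω → ℝ) (hmeas : ∀ t, Measurable (W t))
    (hindep : iIndepFun W P)
    (hident : ∀ t, Measure.map (W t) P = Measure.map (W 0) P)
    (hint : Integrable (W 0) P)
    (D : ℝ) (hD : ∫ ω, W 0 ω ∂P = D) (hDpos : 0 < D) :
    Filter.limsup
        (fun b : ℝ => (∫⁻ ω, (cusumWHit W b ω : ℝ≥0∞) ∂P) / ENNReal.ofReal b)
        Filter.atTop ≤ ENNReal.ofReal (1 / D) := by
  refine ENNReal.le_of_forall_pos_le_add fun ε hε _ => ?_
  have hεR : (0:ℝ) < ε := hε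
  have hsum : (0:ℝ) < 1/D + ε := by positivity
  set a : ℝ := (1/D + ε)⁻¹ with hadef
  have ha : 0 < a := inv_pos.2 hsum
  have haD : a < D := by
    have h1 : (1:ℝ)/D < 1/D + ε := lt_add_of_pos_right _ hεR
    have h2 : ((1:ℝ)/D + ε)⁻¹ < (1/D)⁻¹ := inv_strictAnti₀ (by positivity) h1
    rw [one_div, inv_inv] at h2
    rw [hadef, one_div]
    exact h2
  have hmain := limsup_le_one_div P W hmeas hindep hident hint D hD a ha haD
  have h1a : 1/a = 1/D + ε := by rw [hadef, one_div, inv_inv]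
  refine hmain.trans (le_of_eq ?_)
  rw [h1a, ENNReal.ofReal_add (by positivity) hεR.le, ENNReal.ofReal_coe_nnreal]

end QCDStmt
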